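/- Fix β ∈ (0,1), α = √(1−β²), x₁, x₂ ∈ ℝ with x₁ ≠ (π/α)(1/2+k) for every integer k. Let B, Bₜ be the breather profile with parameters (β, x₁, x₂) and let K̄(x) = 4·arctan(e^{θ̄(x)}), θ̄(x) = β(x+x₂) − iα x₁, K̄ₜ(x) = −4iα e^{θ̄(x)}/(1+e^{2θ̄(x)}) be the conjugate complex kink profile. Then for all x ∈ ℝ: B′(x) − K̄ₜ(x) = (1/(β−iα))·sin((B(x)+K̄(x))/2) + (β−iα)·sin((B(x)−K̄(x))/2) and Bₜ(x) − K̄′(x) = (1/(β−iα))·sin((B(x)+K̄(x))/2) − (β−iα)·sin((B(x)−K̄(x))/2); i.e. (B, Bₜ) is a Bäcklund transform of (K̄, K̄ₜ) with complex parameter β − iα. -/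

import Mathlib

set_option maxHeartbeats 2000000
open Complex

lemma one_add_real_mul_I_ne (r : ℝ) : 1 + (r:ℂ) * I ≠ 0 := by
  intro h
  have := congrArg Complex.re h
  simp at this

lemma one_sub_real_mul_I_ne (r : ℝ) : 1 - (r:ℂ) * I ≠ 0 := by
  intro h
  have := congrArg Complex.re h
  simp at this

lemma exp_two_arctan (z : ℂ) (h1 : 1 + z * I ≠ 0) (h2 : 1 - z * I ≠ 0) :
    exp (2 * arctan z * I) = (1 + z * I) / (1 - z * I) := by
  have hq : (1 + z * I) / (1 - z * I) ≠ 0 := div_ne_zero h1 h2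
  have h : 2 * arctan z * I = Complex.log ((1 + z * I) / (1 - z * I)) := by
    rw [Complex.arctan]
    linear_combination (-(Complex.log ((1 + z * I) / (1 - z * I)))) * Complex.I_sq
  rw [h, Complex.exp_log hq]

lemma one_add_sq (z : ℂ) : (1 + z * I) * (1 - z * I) = 1 + z ^ 2 := by
  linear_combination (-(z ^ 2)) * Complex.I_sq

lemma sin_two_arctan (z : ℂ) (h1 : 1 + z * I ≠ 0) (h2 : 1 - z * I ≠ 0) :
    Complex.sin (2 * arctan z) = 2 * z / (1 + z ^ 2) := by
  have h3 : (1 : ℂ) + z ^ 2 ≠ 0 := by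
    rw [← one_add_sq z]; exact mul_ne_zero h1 h2
  have he : exp (2 * arctan z * I) = (1 + z * I) / (1 - z * I) := exp_two_arctan z h1 h2
  have he' : exp (-(2 * arctan z) * I) = (1 - z * I) / (1 + z * I) := by
    rw [neg_mul, Complex.exp_neg, he, inv_div]
  rw [Complex.sin, he, he']
  field_simp
  linear_combination (-4*z) * Complex.I_sq

lemma cos_two_arctan (z : ℂ) (h1 : 1 + z * I ≠ 0) (h2 : 1 - z * I ≠ 0) :
    Complex.cos (2 * arctan z) = (1 - z ^ 2) / (1 + z ^ 2) := by
  have h3 : (1 : ℂ) + z ^ 2 ≠ 0 := by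
    rw [← one_add_sq z]; exact mul_ne_zero h1 h2
  have he : exp (2 * arctan z * I) = (1 + z * I) / (1 - z * I) := exp_two_arctan z h1 h2
  have he' : exp (-(2 * arctan z) * I) = (1 - z * I) / (1 + z * I) := by
    rw [neg_mul, Complex.exp_neg, he, inv_div]
  rw [Complex.cos, he, he']
  field_simp
  ring_nf
  linear_combination (4*z^2) * Complex.I_sq

theorem breather_backlund_of_conjugate_kink (β x₁ x₂ : ℝ) (hβ0 : 0 < β) (hβ1 : β < 1)
    (α : ℝ) (hα : α = Real.sqrt (1 - β ^ 2))
    (hx₁ : ∀ k : ℤ, x₁ ≠ (Real.pi / α) * (1 / 2 + (k : ℝ)))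
    (B Bt : ℝ → ℝ)
    (hB : ∀ x : ℝ, B x
      = 4 * Real.arctan (β * Real.sin (α * x₁) / (α * Real.cosh (β * (x + x₂)))))
    (hBt : ∀ x : ℝ, Bt x
      = 4 * α ^ 2 * β * Real.cos (α * x₁) * Real.cosh (β * (x + x₂))
          / (α ^ 2 * (Real.cosh (β * (x + x₂))) ^ 2 + β ^ 2 * (Real.sin (α * x₁)) ^ 2))
    (θbar : ℝ → ℂ)
    (hθbar : ∀ x : ℝ, θbar x
      = (β : ℂ) * ((x : ℂ) + (x₂ : ℂ)) - Complex.I * (α : ℂ) * (x₁ : ℂ))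
    (Kbar Kbart : ℝ → ℂ)
    (hKbar : ∀ x : ℝ, Kbar x = 4 * Complex.arctan (Complex.exp (θbar x)))
    (hKbart : ∀ x : ℝ, Kbart x
      = -4 * Complex.I * (α : ℂ) * Complex.exp (θbar x) / (1 + Complex.exp (2 * θbar x))) :
    (∀ x : ℝ, ((deriv B x : ℝ) : ℂ) - Kbart x
      = (1 / ((β : ℂ) - Complex.I * (α : ℂ))) * Complex.sin (((B x : ℂ) + Kbar x) / 2)
        + ((β : ℂ) - Complex.I * (α : ℂ)) * Complex.sin (((B x : ℂ) - Kbar x) / 2)) ∧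
    (∀ x : ℝ, (Bt x : ℂ) - deriv Kbar x
      = (1 / ((β : ℂ) - Complex.I * (α : ℂ))) * Complex.sin (((B x : ℂ) + Kbar x) / 2)
        - ((β : ℂ) - Complex.I * (α : ℂ)) * Complex.sin (((B x : ℂ) - Kbar x) / 2)) := by
  have hb2 : (0:ℝ) < 1 - β ^ 2 := by nlinarith
  have hα0 : (0:ℝ) < α := by rw [hα]; exact Real.sqrt_pos.mpr hb2
  have hα2 : α ^ 2 = 1 - β ^ 2 := by rw [hα]; exact Real.sq_sqrt hb2.le
  have hco : Real.cos (α * x₁) ≠ 0 := by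
    rw [Real.cos_ne_zero_iff]
    intro k hk
    refine hx₁ k ?_
    rw [div_mul_eq_mul_div, eq_div_iff hα0.ne']
    linear_combination hk
  -- notation
  set s := Real.sin (α * x₁) with hs
  set c := Real.cos (α * x₁) with hc
  have hα2C : (α:ℂ)^2 + (β:ℂ)^2 = 1 := by norm_cast; linarith
  have hscC : (s:ℂ)^2 + (c:ℂ)^2 = 1 := by norm_cast; exact Real.sin_sq_add_cos_sq _
  have hmul : ((β:ℂ) - I*α) * ((β:ℂ) + I*α) = 1 := by
    linear_combination hα2C - (α:ℂ)^2 * Complex.I_sq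
  have hp : ((β:ℂ) - I*α) ≠ 0 := by
    intro h; rw [h, zero_mul] at hmul; exact zero_ne_one hmul
  have hpinv : 1 / ((β:ℂ) - I*α) = (β:ℂ) + I*α := by
    rw [div_eq_iff hp]; linear_combination -hmul
  have main : ∀ x : ℝ,
      (((deriv B x : ℝ) : ℂ) - Kbart x
      = (1 / ((β : ℂ) - Complex.I * (α : ℂ))) * Complex.sin (((B x : ℂ) + Kbar x) / 2)
        + ((β : ℂ) - Complex.I * (α : ℂ)) * Complex.sin (((B x : ℂ) - Kbar x) / 2)) ∧
      ((Bt x : ℂ) - deriv Kbar x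
      = (1 / ((β : ℂ) - Complex.I * (α : ℂ))) * Complex.sin (((B x : ℂ) + Kbar x) / 2)
        - ((β : ℂ) - Complex.I * (α : ℂ)) * Complex.sin (((B x : ℂ) - Kbar x) / 2)) := by
    intro x
    set w := β * (x + x₂) with hw
    set ch := Real.cosh w with hch
    set sh := Real.sinh w with hsh
    have hch0 : (0:ℝ) < ch := Real.cosh_pos w
    have hchsh : (ch:ℂ)^2 - (sh:ℂ)^2 = 1 := by norm_cast; exact Real.cosh_sq_sub_sinh_sq w
    set v := Complex.exp (θbar x) with hv
    -- factored form of v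
    have hθx : θbar x = (w : ℂ) + ((-(α * x₁) : ℝ) : ℂ) * I := by
      rw [hθbar x, hw]; push_cast; ring
    have hvfact : v = ((ch:ℂ) + (sh:ℂ)) * ((c:ℂ) - I * (s:ℂ)) := by
      rw [hv, hθx, Complex.exp_add, ← Complex.ofReal_exp, ← Real.cosh_add_sinh,
        Complex.exp_mul_I, ← Complex.ofReal_cos, ← Complex.ofReal_sin,
        Real.cos_neg, Real.sin_neg, ← hch, ← hsh, ← hs, ← hc]
      push_cast; ring
    have hvre : v.re = Real.exp w * c := by
      rw [hv, Complex.exp_re, hθx]; simp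
      exact hc.symm
    have hvre0 : v.re ≠ 0 := by
      rw [hvre]; exact mul_ne_zero (Real.exp_ne_zero w) hco
    have h1 : 1 + v * I ≠ 0 := by
      intro h
      have := congrArg Complex.im h
      simp at this
      exact hvre0 this
    have h2 : 1 - v * I ≠ 0 := by
      intro h
      have := congrArg Complex.im h
      simp at this
      exact hvre0 this
    have h1v2 : 1 + v ^ 2 ≠ 0 := by
      rw [← one_add_sq v]; exact mul_ne_zero h1 h2
    -- derivative of B
    have hwD : HasDerivAt (fun y : ℝ => β * (y + x₂)) β x := by
      simpa using ((hasDerivAt_id x).add_const x₂).const_mul β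
    have hdenD : HasDerivAt (fun y => α * Real.cosh (β * (y + x₂))) (α * (sh * β)) x :=
      ((Real.hasDerivAt_cosh w).comp (h := fun y : ℝ => β * (y + x₂)) x hwD).const_mul α
    have hden0 : α * Real.cosh (β * (x + x₂)) ≠ 0 := by
      rw [← hw, ← hch]; positivity
    have huD : HasDerivAt (fun y => β * s / (α * Real.cosh (β * (y + x₂))))
        ((0 * (α * Real.cosh (β * (x + x₂))) - β * s * (α * (sh * β)))
          / (α * Real.cosh (β * (x + x₂))) ^ 2) x :=
      (hasDerivAt_const x (β * s)).div hdenD hden0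
    have hBd : deriv B x = 4 * (1 / (1 + (β * s / (α * ch)) ^ 2) *
        ((0 * (α * ch) - β * s * (α * (sh * β))) / (α * ch) ^ 2)) := by
      have hBfun : B = fun y => 4 * Real.arctan (β * s / (α * Real.cosh (β * (y + x₂)))) :=
        funext hB
      rw [hBfun]
      have := ((Real.hasDerivAt_arctan _).comp x huD).const_mul 4
      rw [← hw, ← hch] at this
      exact this.deriv
    -- derivative of Kbar
    have hxD : HasDerivAt (fun y : ℝ => (y : ℂ)) 1 x := by
      simpa using (hasDerivAt_id x).ofReal_comp
    have hθD : HasDerivAt θbar (β : ℂ) x := by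
      have hfun : θbar = fun y : ℝ => (β:ℂ) * ((y:ℂ) + (x₂:ℂ)) - I*(α:ℂ)*(x₁:ℂ) :=
        funext hθbar
      rw [hfun]
      simpa using ((hxD.add_const ((x₂:ℝ):ℂ)).const_mul (β:ℂ)).sub_const (I*(α:ℂ)*(x₁:ℂ))
    have hvD : HasDerivAt (fun y => Complex.exp (θbar y)) (v * β) x := by
      simpa [← hv, mul_comm] using hθD.cexp
    have hND : HasDerivAt (fun y => 1 + Complex.exp (θbar y) * I) (v * β * I) x :=
      (hvD.mul_const I).const_add 1
    have hDD : HasDerivAt (fun y => 1 - Complex.exp (θbar y) * I) (-(v * β * I)) x :=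
      (hvD.mul_const I).const_sub 1
    have hqD : HasDerivAt
        (fun y => (1 + Complex.exp (θbar y) * I) / (1 - Complex.exp (θbar y) * I))
        ((v * β * I * (1 - v * I) - (1 + v * I) * -(v * β * I)) / (1 - v * I) ^ 2) x := by
      have := hND.div hDD (by rw [← hv]; exact h2)
      rw [← hv] at this
      exact this
    have hns : 0 < Complex.normSq (1 - v * I) := Complex.normSq_pos.mpr h2
    have him : ((1 + v * I) / (1 - v * I)).im ≠ 0 := by
      rw [Complex.div_im]
      have hval : (1 + v * I).im * (1 - v * I).re / Complex.normSq (1 - v * I) -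
          (1 + v * I).re * (1 - v * I).im / Complex.normSq (1 - v * I)
          = 2 * v.re / Complex.normSq (1 - v * I) := by
        simp [Complex.add_im, Complex.add_re, Complex.sub_re, Complex.sub_im,
          Complex.mul_im, Complex.mul_re]
        ring
      rw [hval]
      exact div_ne_zero (by simpa using hvre0) hns.ne'
    have hslit : (1 + v * I) / (1 - v * I) ∈ Complex.slitPlane := Or.inr him
    have hlogD : HasDerivAt
        (fun y => Complex.log ((1 + Complex.exp (θbar y) * I) / (1 - Complex.exp (θbar y) * I)))
        (((v * β * I * (1 - v * I) - (1 + v * I) * -(v * β * I)) / (1 - v * I) ^ 2)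
          / ((1 + v * I) / (1 - v * I))) x :=
      hqD.clog_real hslit
    have hKd : deriv Kbar x = 4 * β * v / (1 + v ^ 2) := by
      have hKfun : Kbar = fun y => 4 * (-I / 2 * Complex.log
          ((1 + Complex.exp (θbar y) * I) / (1 - Complex.exp (θbar y) * I))) := by
        funext y
        rw [hKbar y, Complex.arctan]
      rw [hKfun, ((hlogD.const_mul (-I/2)).const_mul 4).deriv]
      rw [← one_add_sq v]
      field_simp
      rw [Complex.I_sq]; ring
    -- cast helpers
    have hαC : ((α:ℝ):ℂ) ≠ 0 := Complex.ofReal_ne_zero.mpr hα0.ne'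
    have hchC : ((ch:ℝ):ℂ) ≠ 0 := Complex.ofReal_ne_zero.mpr hch0.ne'
    have hU1 : 1 + ((β * s / (α * ch) : ℝ) : ℂ) * I ≠ 0 := one_add_real_mul_I_ne _
    have hU2 : 1 - ((β * s / (α * ch) : ℝ) : ℂ) * I ≠ 0 := one_sub_real_mul_I_ne _
    have h1U2 : 1 + ((β * s / (α * ch) : ℝ) : ℂ) ^ 2 ≠ 0 := by
      rw [← one_add_sq]; exact mul_ne_zero hU1 hU2
    have hBxC : ((B x : ℝ) : ℂ) = 4 * Complex.arctan (((β * s / (α * ch)) : ℝ) : ℂ) := by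
      rw [hB x, ← hw, ← hch]
      push_cast [Complex.ofReal_arctan]
      ring
    have hsum : (((B x : ℝ):ℂ) + Kbar x) / 2
        = 2 * Complex.arctan (((β * s / (α * ch)) : ℝ) : ℂ) + 2 * Complex.arctan v := by
      rw [hBxC, hKbar x, ← hv]; ring
    have hdif : (((B x : ℝ):ℂ) - Kbar x) / 2
        = 2 * Complex.arctan (((β * s / (α * ch)) : ℝ) : ℂ) - 2 * Complex.arctan v := by
      rw [hBxC, hKbar x, ← hv]; ring
    have hexp2 : Complex.exp (2 * θbar x) = v ^ 2 := by
      rw [two_mul, Complex.exp_add, ← hv]; ring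
    have hBtden : ((α:ℂ))^2*((ch:ℝ):ℂ)^2 + ((β:ℂ))^2*((s:ℝ):ℂ)^2 ≠ 0 := by
      have h0 : (0:ℝ) < α^2*ch^2 + β^2*s^2 := by positivity
      intro h
      rw [show ((α:ℂ))^2*((ch:ℝ):ℂ)^2 + ((β:ℂ))^2*((s:ℝ):ℂ)^2
          = (((α^2*ch^2 + β^2*s^2 : ℝ)):ℂ) by push_cast; ring] at h
      exact h0.ne' (by exact_mod_cast h)
    have hTR : α^2*ch^2 + β^2*s^2 ≠ 0 := by positivity
    have hq2R : 1 + (β * s / (α * ch)) ^ 2 = (α^2*ch^2 + β^2*s^2)/(α^2*ch^2) := by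
      rw [eq_div_iff (by positivity : α^2*ch^2 ≠ 0)]
      field_simp
    have hBdR : deriv B x = -(4*α*β^2*s*sh) / (α^2*ch^2 + β^2*s^2) := by
      rw [hBd, hq2R, one_div_div]
      field_simp
      ring
    have hSu : Complex.sin (2 * Complex.arctan (((β * s / (α * ch)) : ℝ) : ℂ))
        = 2*(α:ℂ)*((ch:ℝ):ℂ)*(β:ℂ)*((s:ℝ):ℂ)
          / ((α:ℂ)^2*((ch:ℝ):ℂ)^2 + (β:ℂ)^2*((s:ℝ):ℂ)^2) := by
      rw [sin_two_arctan _ hU1 hU2, div_eq_div_iff h1U2 hBtden]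
      push_cast
      field_simp
    have hCu : Complex.cos (2 * Complex.arctan (((β * s / (α * ch)) : ℝ) : ℂ))
        = ((α:ℂ)^2*((ch:ℝ):ℂ)^2 - (β:ℂ)^2*((s:ℝ):ℂ)^2)
          / ((α:ℂ)^2*((ch:ℝ):ℂ)^2 + (β:ℂ)^2*((s:ℝ):ℂ)^2) := by
      rw [cos_two_arctan _ hU1 hU2, div_eq_div_iff h1U2 hBtden]
      push_cast
      field_simp
    have hBd' : ((deriv B x : ℝ) : ℂ) = -(4*(α:ℂ)*(β:ℂ)^2*((s:ℝ):ℂ)*((sh:ℝ):ℂ))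
          / ((α:ℂ)^2*((ch:ℝ):ℂ)^2 + (β:ℂ)^2*((s:ℝ):ℂ)^2) := by
      rw [hBdR]
      push_cast
      ring
    constructor
    · rw [hKbart x, ← hv, hexp2, hBd', hsum, hdif, Complex.sin_add, Complex.sin_sub,
        hSu, hCu, sin_two_arctan v h1 h2, cos_two_arctan v h1 h2, hpinv]
      field_simp [hBtden, h1v2]
      linear_combination ((-4)*(α:ℂ)*(β:ℂ)^2*(s:ℂ)*(sh:ℂ)*v + (4)*(α:ℂ)*(β:ℂ)^2*(s:ℂ)*(ch:ℂ)*v + (-4)*(α:ℂ)*(β:ℂ)^2*(s:ℂ)*(c:ℂ)*(sh:ℂ)^2 + (4)*(α:ℂ)*(β:ℂ)^2*(s:ℂ)*(c:ℂ)*(ch:ℂ)^2 + (8)*(α:ℂ)*(β:ℂ)^2*(s:ℂ)^2*I + (4)*(α:ℂ)*(β:ℂ)^2*(s:ℂ)^2*(sh:ℂ)^2*I + (-4)*(α:ℂ)*(β:ℂ)^2*(s:ℂ)^2*(ch:ℂ)^2*I) * hvfact + ((-8)*(α:ℂ)*(β:ℂ)^2*(s:ℂ)^3*(sh:ℂ)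 + (-4)*(α:ℂ)*(β:ℂ)^2*(s:ℂ)^3*(sh:ℂ)^3 + (-8)*(α:ℂ)*(β:ℂ)^2*(s:ℂ)^3*(ch:ℂ) + (-4)*(α:ℂ)*(β:ℂ)^2*(s:ℂ)^3*(ch:ℂ)*(sh:ℂ)^2 + (4)*(α:ℂ)*(β:ℂ)^2*(s:ℂ)^3*(ch:ℂ)^2*(sh:ℂ) + (4)*(α:ℂ)*(β:ℂ)^2*(s:ℂ)^3*(ch:ℂ)^3) * Complex.I_sq + ((-4)*(α:ℂ)*(β:ℂ)^2*(s:ℂ)*(sh:ℂ)^3 + (-4)*(α:ℂ)*(β:ℂ)^2*(s:ℂ)*(ch:ℂ)*(sh:ℂ)^2 + (4)*(α:ℂ)*(β:ℂ)^2*(s:ℂ)*(ch:ℂ)^2*(sh:ℂ) + (4)*(α:ℂ)*(β:ℂ)^2*(s:ℂ)*(ch:ℂ)^3) * hscC + ((4)*(α:ℂ)*(β:ℂ)^2*(s:ℂ)*(sh:ℂ) + (4)*(α:ℂ)*(β:ℂ)^2*(s:ℂ)*(ch:ℂ) + (-8)*(α:ℂ)*(β:ℂ)^2*(s:ℂ)^2*(c:ℂ)*(sh:ℂ)*I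 + (-8)*(α:ℂ)*(β:ℂ)^2*(s:ℂ)^2*(c:ℂ)*(ch:ℂ)*I + (-8)*(α:ℂ)*(β:ℂ)^2*(s:ℂ)^3*(sh:ℂ) + (-8)*(α:ℂ)*(β:ℂ)^2*(s:ℂ)^3*(ch:ℂ)) * hchsh + (0) * hα2C
    · rw [hBt x, ← hw, ← hch, hKd, hsum, hdif, Complex.sin_add, Complex.sin_sub,
        hSu, hCu, sin_two_arctan v h1 h2, cos_two_arctan v h1 h2, hpinv]
      push_cast
      field_simp [hBtden, h1v2]
      linear_combination ((-8)*(α:ℂ)^2*(β:ℂ)*(ch:ℂ)^2 + (4)*(α:ℂ)^2*(β:ℂ)*(c:ℂ)*(ch:ℂ)*v + (4)*(α:ℂ)^2*(β:ℂ)*(c:ℂ)^2*(ch:ℂ)*(sh:ℂ) + (4)*(α:ℂ)^2*(β:ℂ)*(c:ℂ)^2*(ch:ℂ)^2 + (4)*(α:ℂ)^2*(β:ℂ)*(s:ℂ)*(ch:ℂ)*v*I + (-4)*(α:ℂ)^2*(β:ℂ)*(s:ℂ)^2*(ch:ℂ)*(sh:ℂ)*I^2 + (-4)*(α:ℂ)^2*(β:ℂ)*(s:ℂ)^2*(ch:ℂ)^2*I^2)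 * hvfact + ((-4)*(α:ℂ)^2*(β:ℂ)*(s:ℂ)^2*(c:ℂ)*(ch:ℂ)*(sh:ℂ)^2 + (-8)*(α:ℂ)^2*(β:ℂ)*(s:ℂ)^2*(c:ℂ)*(ch:ℂ)^2*(sh:ℂ) + (-4)*(α:ℂ)^2*(β:ℂ)*(s:ℂ)^2*(c:ℂ)*(ch:ℂ)^3 + (4)*(α:ℂ)^2*(β:ℂ)*(s:ℂ)^3*(ch:ℂ)*(sh:ℂ)^2*I + (8)*(α:ℂ)^2*(β:ℂ)*(s:ℂ)^3*(ch:ℂ)^2*(sh:ℂ)*I + (4)*(α:ℂ)^2*(β:ℂ)*(s:ℂ)^3*(ch:ℂ)^3*I) * Complex.I_sq + ((4)*(α:ℂ)^2*(β:ℂ)*(c:ℂ)*(ch:ℂ)*(sh:ℂ)^2 + (8)*(α:ℂ)^2*(β:ℂ)*(c:ℂ)*(ch:ℂ)^2*(sh:ℂ) + (4)*(α:ℂ)^2*(β:ℂ)*(c:ℂ)*(ch:ℂ)^3 + (-4)*(α:ℂ)^2*(β:ℂ)*(s:ℂ)*(ch:ℂ)*(sh:ℂ)^2*I + (-8)*(α:ℂ)^2*(β:ℂ)*(s:ℂ)*(ch:ℂ)^2*(sh:ℂ)*I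 + (-4)*(α:ℂ)^2*(β:ℂ)*(s:ℂ)*(ch:ℂ)^3*I) * hscC + ((-4)*(α:ℂ)^2*(β:ℂ)*(c:ℂ)*(ch:ℂ) + (4)*(α:ℂ)^2*(β:ℂ)*(s:ℂ)*(ch:ℂ)*I) * hchsh + (0) * hα2C
  exact ⟨fun x => (main x).1, fun x => (main x).2⟩
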